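/- Two-generated embedding of commutator subgroups: For every countable group G there exists a group W generated by two elements and an injective group homomorphism from the commutator subgroup [G, G] of G into W whose image is contained in the commutator subgroup [W, W] of W. -/

import Mathlib

/-!
We prove that every countable group embeds into a 2-generated group
(the Higman–Neumann–Neumann embedding theorem), and deduce the statement about
commutator subgroups.

The construction: given a countable group `H` (WLOG in `Type 0`), with surjective
enumeration `g : ℕ → H`, `g 0 = 1`, let `K := H ∗ FreeGroup Bool` (free product),
with `a, b` the generators of the free factor.  The families
`zA k = b⁻ᵏ a bᵏ` and `g k • (a⁻ᵏ b aᵏ)` each freely generate free subgroups `A`, `B`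
of `K`; freeness is proved by mapping to a semidirect product `FreeGroup ℤ ⋊ ℤ`.
Taking the HNN extension `W` of `K` identifying `A` with `B` via the stable letter `t`,
the group `W` is generated by `{of (inr a), t}` and contains `H`.
-/

open Function Subgroup

namespace TwoGenHelperX

/-- The shift automorphism action of `Multiplicative ℤ` on `FreeGroup ℤ`. -/
def shiftAut : Multiplicative ℤ →* MulAut (FreeGroup ℤ) :=
  MonoidHom.mk' (fun z => FreeGroup.freeGroupCongr (Equiv.addRight (Multiplicative.toAdd z)))
    (by
      intro z w
      have h : (Equiv.addRight (Multiplicative.toAdd w)).trans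
          (Equiv.addRight (Multiplicative.toAdd z))
          = Equiv.addRight (Multiplicative.toAdd (z * w)) := by
        ext x
        simp only [Equiv.trans_apply, Equiv.coe_addRight, toAdd_mul]
        ring
      have htr : FreeGroup.freeGroupCongr (Equiv.addRight (Multiplicative.toAdd (z * w)))
          = (FreeGroup.freeGroupCongr (Equiv.addRight (Multiplicative.toAdd w))).trans
            (FreeGroup.freeGroupCongr (Equiv.addRight (Multiplicative.toAdd z))) := by
        rw [FreeGroup.freeGroupCongr_trans, h]
      exact MulEquiv.ext fun q => by
        change FreeGroup.freeGroupCongr (Equiv.addRight (Multiplicative.toAdd (z * w))) q = _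
        rw [htr]
        rfl)

lemma shiftAut_apply_of (z : Multiplicative ℤ) (m : ℤ) :
    shiftAut z (FreeGroup.of m) = FreeGroup.of (m + Multiplicative.toAdd z) := by
  simp [shiftAut]

/-- The semidirect product `FreeGroup ℤ ⋊ ℤ` used as a target to prove freeness. -/
abbrev SGrp : Type := SemidirectProduct (FreeGroup ℤ) (Multiplicative ℤ) shiftAut

/-- The test homomorphism from the free group on two letters to `SGrp`. -/
def xi (c : Bool) : FreeGroup Bool →* SGrp :=
  FreeGroup.lift (fun bit =>
    if bit = c then SemidirectProduct.inl (FreeGroup.of (0 : ℤ))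
    else SemidirectProduct.inr (Multiplicative.ofAdd 1))

lemma xi_conj (c d : Bool) (hcd : d ≠ c) (k : ℕ) :
    xi c (((FreeGroup.of d) ^ k)⁻¹ * FreeGroup.of c * (FreeGroup.of d) ^ k)
      = SemidirectProduct.inl (FreeGroup.of (-(k : ℤ))) := by
  have h1 : xi c (FreeGroup.of c) = SemidirectProduct.inl (FreeGroup.of (0 : ℤ)) := by
    simp [xi]
  have h2 : xi c (FreeGroup.of d) = SemidirectProduct.inr (Multiplicative.ofAdd 1) := by
    simp [xi, hcd]
  have hpow : xi c ((FreeGroup.of d) ^ k)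
      = SemidirectProduct.inr (Multiplicative.ofAdd (k : ℤ)) := by
    rw [map_pow, h2, ← map_pow]
    congr 1
    rw [← ofAdd_nsmul]
    simp
  rw [map_mul, map_mul, map_inv, hpow, h1]
  rw [← map_inv, mul_assoc, ← mul_assoc, ← SemidirectProduct.inl_aut_inv]
  congr 1
  have hinv : (shiftAut (Multiplicative.ofAdd (k : ℤ)))⁻¹
      = shiftAut (Multiplicative.ofAdd (-(k : ℤ))) := by
    rw [← map_inv]
    simp
  rw [hinv, shiftAut_apply_of]
  simp

/-- The embedding `ℕ → ℤ`, `k ↦ -k`, induces an injective map of free groups. -/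
lemma freeGroup_map_neg_injective :
    Injective (FreeGroup.map (fun k : ℕ => -(k : ℤ))) := by
  intro x y h
  have h2 := congrArg (FreeGroup.map (fun z : ℤ => (-z).toNat)) h
  have hcomp : ((fun z : ℤ => (-z).toNat) ∘ (fun k : ℕ => -(k : ℤ))) = id := by
    funext k; simp
  rwa [FreeGroup.map.comp, FreeGroup.map.comp, hcomp, FreeGroup.map.id,
    FreeGroup.map.id] at h2

/-- Key freeness lemma: the conjugates `d⁻ᵏ c dᵏ` freely generate a free subgroup
of the free group on `{c, d}`. -/
lemma conj_lift_injective (c d : Bool) (hcd : d ≠ c) :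
    Injective (FreeGroup.lift (fun k : ℕ =>
      ((FreeGroup.of d) ^ k)⁻¹ * FreeGroup.of c * (FreeGroup.of d) ^ k)) := by
  set L := FreeGroup.lift (fun k : ℕ =>
      ((FreeGroup.of d) ^ k)⁻¹ * FreeGroup.of c * (FreeGroup.of d) ^ k) with hL
  have key : ∀ x, xi c (L x)
      = SemidirectProduct.inl (FreeGroup.map (fun k : ℕ => -(k : ℤ)) x) := by
    have hhom : (xi c).comp L
        = (SemidirectProduct.inl (φ := shiftAut)).comp
            (FreeGroup.map (fun k : ℕ => -(k : ℤ))) := by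
      apply FreeGroup.ext_hom
      intro k
      simp only [MonoidHom.comp_apply, hL, FreeGroup.lift_apply_of, FreeGroup.map.of]
      exact xi_conj c d hcd k
    intro x
    have := DFunLike.congr_fun hhom x
    simpa using this
  intro x y h
  apply freeGroup_map_neg_injective
  apply SemidirectProduct.inl_injective (φ := shiftAut)
  rw [← key, ← key, h]

section Construction

variable (H : Type) [Group H]

/-- Abbbreviation for the free product `H ∗ F₂`. -/
abbrev K : Type := Monoid.Coprod H (FreeGroup Bool)

/-- first basis family: `b⁻ᵏ a bᵏ` -/
def zA (k : ℕ) : FreeGroup Bool :=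
  ((FreeGroup.of false) ^ k)⁻¹ * FreeGroup.of true * (FreeGroup.of false) ^ k

/-- second basis family: `a⁻ᵏ b aᵏ` -/
def zB (k : ℕ) : FreeGroup Bool :=
  ((FreeGroup.of true) ^ k)⁻¹ * FreeGroup.of false * (FreeGroup.of true) ^ k

/-- the embedding of `FreeGroup ℕ` onto the subgroup `A`. -/
def eA : FreeGroup ℕ →* K H :=
  FreeGroup.lift (fun k => Monoid.Coprod.inr (zA k))

variable (g : ℕ → H)

/-- the embedding of `FreeGroup ℕ` onto the subgroup `B`. -/
def eB : FreeGroup ℕ →* K H :=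
  FreeGroup.lift (fun k => Monoid.Coprod.inl (g k) * Monoid.Coprod.inr (zB k))

/-- the retraction of `K` onto the free factor. -/
def ρ : K H →* FreeGroup Bool :=
  Monoid.Coprod.lift 1 (MonoidHom.id (FreeGroup Bool))

lemma rho_eA (x : FreeGroup ℕ) : ρ H (eA H x) = FreeGroup.lift zA x := by
  have : (ρ H).comp (eA H) = FreeGroup.lift zA := by
    apply FreeGroup.ext_hom
    intro k
    simp [ρ, eA, FreeGroup.lift_apply_of]
  exact DFunLike.congr_fun this x

lemma rho_eB (x : FreeGroup ℕ) : ρ H (eB H g x) = FreeGroup.lift zB x := by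
  have : (ρ H).comp (eB H g) = FreeGroup.lift zB := by
    apply FreeGroup.ext_hom
    intro k
    simp [ρ, eB, FreeGroup.lift_apply_of]
  exact DFunLike.congr_fun this x

lemma eA_injective : Injective (eA H) := by
  intro x y h
  apply conj_lift_injective true false (by simp)
  show FreeGroup.lift zA x = FreeGroup.lift zA y
  rw [← rho_eA H, ← rho_eA H, h]

lemma eB_injective : Injective (eB H g) := by
  intro x y h
  apply conj_lift_injective false true (by simp)
  show FreeGroup.lift zB x = FreeGroup.lift zB y
  rw [← rho_eB H g, ← rho_eB H g, h]

end Construction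

/-- Every countable group in `Type 0` embeds into a 2-generated group. -/
theorem embeds_two_generated₀ (H : Type) [Group H] [Countable H] :
    ∃ (W : Type) (_ : Group W) (x y : W),
      Subgroup.closure {x, y} = (⊤ : Subgroup W) ∧
      ∃ i : H →* W, Function.Injective i := by
  classical
  obtain ⟨g0, hg0⟩ := exists_surjective_nat H
  set g : ℕ → H := fun n => Nat.rec 1 (fun m _ => g0 m) n with hgdef
  have hgsurj : ∀ h : H, ∃ k, g k = h := fun h => by
    obtain ⟨m, hm⟩ := hg0 h
    exact ⟨m + 1, hm⟩
  have hg1 : g 0 = 1 := rfl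
  have hA := eA_injective H
  have hB := eB_injective H g
  set A : Subgroup (K H) := (eA H).range with hAdef
  set B : Subgroup (K H) := (eB H g).range with hBdef
  set φ : A ≃* B := (MonoidHom.ofInjective hA).symm.trans (MonoidHom.ofInjective hB) with hφdef
  set W := HNNExtension (K H) A B φ with hWdef
  have key : ∀ w : FreeGroup ℕ,
      (HNNExtension.of (eB H g w) : W)
        = HNNExtension.t * HNNExtension.of (eA H w) * HNNExtension.t⁻¹ := by
    intro w
    have hφw : φ (MonoidHom.ofInjective hA w) = MonoidHom.ofInjective hB w := by
      simp [hφdef]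
    have h := HNNExtension.equiv_eq_conj (φ := φ) (MonoidHom.ofInjective hA w)
    rw [hφw] at h
    rwa [MonoidHom.ofInjective_apply, MonoidHom.ofInjective_apply] at h
  have heAof : ∀ k : ℕ, eA H (FreeGroup.of k) = Monoid.Coprod.inr (zA k) :=
    fun k => FreeGroup.lift_apply_of
  have heBof : ∀ k : ℕ, eB H g (FreeGroup.of k)
      = Monoid.Coprod.inl (g k) * Monoid.Coprod.inr (zB k) :=
    fun k => FreeGroup.lift_apply_of
  refine ⟨W, inferInstance, HNNExtension.of (Monoid.Coprod.inr (FreeGroup.of true)),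
    HNNExtension.t, ?_, ?_⟩
  · -- generation
    rw [eq_top_iff]
    intro w hw
    clear hw
    set S : Subgroup W := Subgroup.closure
      {HNNExtension.of (Monoid.Coprod.inr (FreeGroup.of true)), HNNExtension.t} with hSdef
    show w ∈ S
    have hx : HNNExtension.of (Monoid.Coprod.inr (FreeGroup.of true)) ∈ S :=
      Subgroup.subset_closure (by simp)
    have ht : (HNNExtension.t : W) ∈ S := Subgroup.subset_closure (by simp)
    have hb : HNNExtension.of (Monoid.Coprod.inr (FreeGroup.of false)) ∈ S := by
      have h := key (FreeGroup.of 0)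
      rw [heAof, heBof, hg1] at h
      simp only [zA, zB, pow_zero, inv_one, one_mul, mul_one, map_one] at h
      rw [h]
      exact mul_mem (mul_mem ht hx) (inv_mem ht)
    have hinr : ∀ u : FreeGroup Bool, HNNExtension.of (Monoid.Coprod.inr u) ∈ S := by
      intro u
      induction u using FreeGroup.induction_on with
      | C1 => simpa using one_mem S
      | of x =>
        cases x
        · exact hb
        · exact hx
      | inv_of x ih =>
        rw [map_inv, map_inv]
        exact inv_mem ih
      | mul x y hxS hyS =>
        rw [map_mul, map_mul]
        exact mul_mem hxS hyS
    have hAmem : ∀ k : ℕ, HNNExtension.of (Monoid.Coprod.inr (zA k)) ∈ S := fun k => hinr _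
    have hBmem : ∀ k : ℕ, HNNExtension.of (Monoid.Coprod.inr (zB k)) ∈ S := fun k => hinr _
    have hinl : ∀ h : H, HNNExtension.of (Monoid.Coprod.inl h : K H) ∈ S := by
      intro h
      obtain ⟨k, rfl⟩ := hgsurj h
      have h2 := key (FreeGroup.of k)
      rw [heAof, heBof, map_mul] at h2
      have h3 : (HNNExtension.of (Monoid.Coprod.inl (g k) : K H) : W)
          = HNNExtension.t * HNNExtension.of (Monoid.Coprod.inr (zA k))
              * HNNExtension.t⁻¹
              * (HNNExtension.of (Monoid.Coprod.inr (zB k)))⁻¹ := by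
        rw [← h2]
        group
      rw [h3]
      exact mul_mem (mul_mem (mul_mem ht (hAmem k)) (inv_mem ht)) (inv_mem (hBmem k))
    have hK : ∀ k : K H, (HNNExtension.of k : W) ∈ S := by
      intro k
      induction k using Monoid.Coprod.induction_on with
      | inl h => exact hinl h
      | inr u => exact hinr u
      | mul x y hxS hyS =>
        rw [map_mul]
        exact mul_mem hxS hyS
    obtain ⟨z, rfl⟩ := Con.mk'_surjective (c := HNNExtension.con (K H) A B φ) w
    induction z using Monoid.Coprod.induction_on with
    | inl k => exact hK k
    | inr m =>
      have hm : (HNNExtension.con (K H) A B φ).mk' (Monoid.Coprod.inr m)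
          = (HNNExtension.t : W) ^ (Multiplicative.toAdd m) := by
        have h1 : m = (Multiplicative.ofAdd (1 : ℤ)) ^ (Multiplicative.toAdd m) := by
          rw [← ofAdd_zsmul]
          simp
        calc (HNNExtension.con (K H) A B φ).mk' (Monoid.Coprod.inr m)
            = (HNNExtension.con (K H) A B φ).mk'
                (Monoid.Coprod.inr ((Multiplicative.ofAdd (1 : ℤ))
                  ^ (Multiplicative.toAdd m))) := by rw [← h1]
          _ = ((HNNExtension.con (K H) A B φ).mk'
                (Monoid.Coprod.inr (Multiplicative.ofAdd (1 : ℤ))))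
                  ^ (Multiplicative.toAdd m) := by
                rw [map_zpow, map_zpow]
          _ = (show (HNNExtension.con (K H) A B φ).Quotient from (HNNExtension.t : W) ^ (Multiplicative.toAdd m)) := rfl
      rw [hm]
      exact zpow_mem ht _
    | mul x y hxS hyS =>
      rw [map_mul]
      exact mul_mem hxS hyS
  · -- the embedding
    refine ⟨(HNNExtension.of).comp Monoid.Coprod.inl, fun p q hpq => ?_⟩
    have hpq' : (HNNExtension.of (Monoid.Coprod.inl p : K H) : W)
        = HNNExtension.of (Monoid.Coprod.inl q : K H) := hpq
    exact Monoid.Coprod.inl_injective (HNNExtension.of_injective (G := K H) (A := A) (B := B) (φ := φ) hpq')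

/-- Every countable group embeds into a 2-generated group in `Type 0`. -/
theorem embeds_two_generated (H : Type*) [Group H] [Countable H] :
    ∃ (W : Type) (_ : Group W) (x y : W),
      Subgroup.closure {x, y} = (⊤ : Subgroup W) ∧
      ∃ i : H →* W, Function.Injective i := by
  have : Countable (Shrink.{0} H) := Countable.of_equiv H (equivShrink.{0} H)
  obtain ⟨W, instW, x, y, hgen, i, hi⟩ := embeds_two_generated₀ (Shrink.{0} H)
  let e : H ≃* Shrink.{0} H := (Shrink.mulEquiv.{0, _} (α := H)).symm
  refine ⟨W, instW, x, y, hgen, i.comp e.toMonoidHom, fun p q hpq => ?_⟩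
  exact e.injective (hi hpq)

end TwoGenHelperX

/-- **Two-generated embedding of commutator subgroups**: for every countable group `G`
there is a two-generated group `W` and an injective homomorphism `[G,G] → W`
whose image lies inside `[W,W]`. -/
theorem commutator_embeds_in_two_generated (G : Type*) [Group G] [Countable G] :
    ∃ (W : Type) (_ : Group W) (x y : W),
      Subgroup.closure {x, y} = (⊤ : Subgroup W) ∧
      ∃ ψ : ↥(commutator G) →* W, Function.Injective ψ ∧ ψ.range ≤ commutator W := by
  obtain ⟨W, instW, x, y, hgen, i, hi⟩ := TwoGenHelperX.embeds_two_generated G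
  refine ⟨W, instW, x, y, hgen, i.comp (commutator G).subtype,
    hi.comp (commutator G).subtype_injective, ?_⟩
  rw [MonoidHom.range_comp, Subgroup.range_subtype]
  calc Subgroup.map i (commutator G)
      = Subgroup.map i ⁅(⊤ : Subgroup G), ⊤⁆ := rfl
    _ = ⁅Subgroup.map i ⊤, Subgroup.map i ⊤⁆ := Subgroup.map_commutator _ _ _
    _ ≤ ⁅(⊤ : Subgroup W), ⊤⁆ := Subgroup.commutator_mono le_top le_top
    _ = commutator W := rfl
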